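/- Let λ, μ ∈ ℂ with μ ≠ 0 and let I_λ denote the modified Bessel function defined by its power series. Then for every H > 0 the function F(H) = H^{−1} I_λ(2μ H^{−1}) satisfies the differential equation ¼ H² F''(H) + ¾ H F'(H) − μ² H^{−2} F(H) = ¼(λ² − 1) F(H). In particular, for λ = ±iν with ν ∈ ℝ, the functions H^{−1} I_{±iν}(2μ H^{−1}) satisfy ¼ H² F'' + ¾ H F' − μ² H^{−2} F = −¼(ν² + 1) F, i.e. they are eigenfunctions of the Laplace–Beltrami operator on the Lobachevsky space in horospheric coordinates after Fourier transform along the horosphere. -/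

import Mathlib

/-- The modified Bessel function `I_λ(x) = ∑_{k} (x/2)^{λ+2k}/(k! Γ(λ+k+1))`,
defined by its power series (with complex powers taken via the principal branch,
which for positive real argument is `exp((λ+2k) ln(x/2))`; `1/Γ` vanishes at the
poles of `Γ`, matching the entire function `1/Γ`). -/
noncomputable def besselI (lam : ℂ) (x : ℂ) : ℂ :=
  ∑' k : ℕ, (x / 2) ^ (lam + 2 * (k : ℂ)) / ((k.factorial : ℂ) * Complex.Gamma (lam + k + 1))

/-- `F(H) = H⁻¹ I_λ(2 μ H⁻¹)`. -/
noncomputable def besselF (lam μ : ℂ) : ℝ → ℂ :=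
  fun H => (H : ℂ)⁻¹ * besselI lam (2 * μ / H)

open Complex Filter Topology

lemma inv_Gamma_rec (z : ℂ) : (Complex.Gamma z)⁻¹ = z * (Complex.Gamma (z + 1))⁻¹ := by
  rcases eq_or_ne z 0 with rfl | hz
  · simp [Complex.Gamma_zero]
  rcases eq_or_ne (Complex.Gamma z) 0 with h0 | h0
  · obtain ⟨m, hm⟩ := (Complex.Gamma_eq_zero_iff z).mp h0
    have hm1 : Complex.Gamma (z + 1) = 0 := by
      refine (Complex.Gamma_eq_zero_iff _).mpr ?_
      rcases m with _ | m
      · exact absurd hm (by simpa using hz)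
      · exact ⟨m, by push_cast [hm]; ring⟩
    simp [h0, hm1]
  · rw [Complex.Gamma_add_one z hz, mul_inv, ← mul_assoc, mul_inv_cancel₀ hz, one_mul]

noncomputable def bcoef (lam : ℂ) (n : ℕ) : ℂ :=
  ((n.factorial : ℂ) * Complex.Gamma (lam + n + 1))⁻¹

lemma bcoef_rec (lam : ℂ) (n : ℕ) :
    bcoef lam n = ((n : ℂ) + 1) * (lam + n + 1) * bcoef lam (n + 1) := by
  unfold bcoef
  have h1 : (Complex.Gamma (lam + n + 1))⁻¹
      = (lam + n + 1) * (Complex.Gamma (lam + n + 1 + 1))⁻¹ := inv_Gamma_rec _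
  have h2 : (((n+1).factorial : ℕ) : ℂ) = ((n:ℂ)+1) * ((n.factorial : ℕ) : ℂ) := by
    push_cast [Nat.factorial_succ]; ring
  have h3 : lam + ((n:ℕ)+1 : ℕ) + 1 = lam + n + 1 + 1 := by push_cast; ring
  rw [mul_inv, h1, h3, h2, mul_inv, mul_inv]
  have hn : ((n:ℂ)+1) ≠ 0 := by
    exact_mod_cast Nat.cast_add_one_ne_zero (R := ℂ) n
  linear_combination (-(lam + (n:ℂ) + 1) * ((n.factorial:ℂ))⁻¹ *
    (Complex.Gamma (lam + (n:ℂ) + 1 + 1))⁻¹) * mul_inv_cancel₀ hn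

noncomputable def ccoef (lam μ : ℂ) (n : ℕ) : ℂ := μ ^ (lam + 2 * (n:ℂ)) * bcoef lam n

lemma cpow_two' (μ : ℂ) : μ ^ (2:ℂ) = μ ^ 2 := by
  rw [show (2:ℂ) = ((2:ℕ):ℂ) by norm_num, Complex.cpow_natCast]

lemma ccoef_rec (lam μ : ℂ) (hμ : μ ≠ 0) (n : ℕ) :
    μ ^ 2 * ccoef lam μ n = ((n:ℂ) + 1) * (lam + (n:ℂ) + 1) * ccoef lam μ (n + 1) := by
  unfold ccoef
  have h1 : μ ^ (lam + 2 * (((n+1 : ℕ)):ℂ)) = μ ^ (lam + 2*(n:ℂ)) * μ ^ 2 := by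
    push_cast
    rw [show lam + 2*((n:ℂ)+1) = (lam + 2*(n:ℂ)) + 2 by ring, Complex.cpow_add _ _ hμ,
      cpow_two']
  rw [h1, bcoef_rec lam n]
  ring

def BDecay (D : ℕ → ℂ) : Prop := ∀ R : ℝ, 0 < R → Summable fun n => ‖D n‖ * R ^ n

lemma BDecay.congr {D D' : ℕ → ℂ} (hD : BDecay D) (h : ∀ n, D' n = D n) : BDecay D' :=
  fun R hR => ((hD R hR).congr fun n => by rw [h n])

lemma BDecay.mul_linear {D : ℕ → ℂ} (hD : BDecay D) (c d : ℂ) :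
    BDecay fun n => (c - d * (n:ℂ)) * D n := by
  intro R hR
  have h2 : ∀ n : ℕ, ‖(c - d*(n:ℂ)) * D n‖ * R ^ n ≤ (‖c‖ + ‖d‖) * (‖D n‖ * (2*R) ^ n) := by
    intro n
    have hb : ‖c - d*(n:ℂ)‖ ≤ (‖c‖ + ‖d‖) * 2 ^ n := by
      have h1 : ‖c - d*(n:ℂ)‖ ≤ ‖c‖ + ‖d‖ * n := by
        refine (norm_sub_le _ _).trans ?_
        have : ‖d * (n:ℂ)‖ = ‖d‖ * n := by
          rw [norm_mul]; simp
        rw [this]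
      have h2 : (1:ℝ) ≤ 2 ^ n := one_le_pow₀ (by norm_num)
      have h3 : (n:ℝ) ≤ 2 ^ n := by
        exact_mod_cast (Nat.lt_two_pow_self (n := n)).le
      nlinarith [norm_nonneg c, norm_nonneg d]
    calc ‖(c - d*(n:ℂ)) * D n‖ * R ^ n = ‖c - d*(n:ℂ)‖ * (‖D n‖ * R ^ n) := by
          rw [norm_mul]; ring
    _ ≤ ((‖c‖+‖d‖) * 2^n) * (‖D n‖ * R^n) := by
          have hDR : 0 ≤ ‖D n‖ * R ^ n := by positivity
          exact mul_le_mul_of_nonneg_right hb hDR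
    _ = (‖c‖+‖d‖) * (‖D n‖ * (2*R)^n) := by rw [mul_pow]; ring
  refine Summable.of_nonneg_of_le (fun n => by positivity) h2 ?_
  exact ((hD (2*R) (by linarith)).mul_left _)

lemma decay_ccoef (lam μ : ℂ) (hμ : μ ≠ 0) : BDecay (ccoef lam μ) := by
  intro R hR
  apply summable_of_ratio_norm_eventually_le (r := 1/2) (by norm_num)
  rw [eventually_atTop]
  refine ⟨⌈‖lam‖ + 2 * (‖μ‖^2 * R)⌉₊, fun n hn => ?_⟩
  have hnR : ‖lam‖ + 2 * (‖μ‖^2 * R) ≤ (n:ℝ) :=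
    le_trans (Nat.le_ceil _) (by exact_mod_cast hn)
  -- norms of the recurrence
  have hrec := ccoef_rec lam μ hμ n
  have hnorm : (((n:ℝ)+1) * ‖lam + (n:ℂ) + 1‖) * ‖ccoef lam μ (n+1)‖
      = ‖μ‖^2 * ‖ccoef lam μ n‖ := by
    have := congrArg norm hrec
    rw [norm_mul, norm_mul, norm_mul, norm_pow] at this
    have hn1 : ‖(n:ℂ) + 1‖ = (n:ℝ) + 1 := by
      rw [show ((n:ℂ) + 1) = (((n+1:ℕ)):ℂ) by push_cast; ring,
        Complex.norm_natCast]
      push_cast; ring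
    rw [hn1] at this
    linarith [this]
  have hlb : (n:ℝ) + 1 - ‖lam‖ ≤ ‖lam + (n:ℂ) + 1‖ := by
    have h1 : ‖((n+1 : ℕ):ℂ)‖ - ‖-lam‖ ≤ ‖((n+1:ℕ):ℂ) - (-lam)‖ := norm_sub_norm_le _ _
    have h2 : ‖((n+1 : ℕ):ℂ)‖ = (n:ℝ)+1 := by
      rw [Complex.norm_natCast]; push_cast; ring
    have h3 : ((n+1:ℕ):ℂ) - (-lam) = lam + (n:ℂ) + 1 := by push_cast; ring
    rw [h2, h3, norm_neg] at h1
    linarith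
  have hKpos : (0:ℝ) < ((n:ℝ)+1) * ‖lam + (n:ℂ) + 1‖ := by
    have : (0:ℝ) < (n:ℝ) + 1 - ‖lam‖ := by nlinarith [norm_nonneg μ, hR.le]
    have h4 : (0:ℝ) < ‖lam + (n:ℂ) + 1‖ := lt_of_lt_of_le this hlb
    exact mul_pos (by positivity) h4
  have hKge : 2 * (‖μ‖^2 * R) ≤ ((n:ℝ)+1) * ‖lam + (n:ℂ) + 1‖ := by
    have h5 : 2 * (‖μ‖^2 * R) ≤ ‖lam + (n:ℂ) + 1‖ := by
      refine le_trans ?_ hlb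
      nlinarith [norm_nonneg lam]
    have h6 : (1:ℝ) ≤ (n:ℝ) + 1 := by
      have : (0:ℝ) ≤ (n:ℝ) := by positivity
      linarith
    nlinarith [norm_nonneg (lam + (n:ℂ) + 1), hR, norm_nonneg μ]
  -- conclude
  have habs1 : ‖‖ccoef lam μ (n+1)‖ * R ^ (n+1)‖ = ‖ccoef lam μ (n+1)‖ * R ^ (n+1) := by
    rw [Real.norm_eq_abs]; exact abs_of_nonneg (by positivity)
  have habs2 : ‖‖ccoef lam μ n‖ * R ^ n‖ = ‖ccoef lam μ n‖ * R ^ n := by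
    rw [Real.norm_eq_abs]; exact abs_of_nonneg (by positivity)
  rw [habs1, habs2]
  -- want: ‖c_{n+1}‖ R^{n+1} ≤ 1/2 ‖c_n‖ R^n
  have hRpow : (0:ℝ) < R ^ n := by positivity
  rw [pow_succ]
  -- multiply target by K > 0
  rw [← mul_le_mul_iff_right₀ hKpos]
  calc ((n:ℝ)+1) * ‖lam + (n:ℂ) + 1‖ * (‖ccoef lam μ (n+1)‖ * (R ^ n * R))
      = (‖μ‖^2 * ‖ccoef lam μ n‖) * R * R ^ n := by rw [← hnorm]; ring
    _ ≤ (((n:ℝ)+1) * ‖lam + (n:ℂ) + 1‖ / 2) * ‖ccoef lam μ n‖ * R ^ n := by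
        have : ‖μ‖^2 * R ≤ ((n:ℝ)+1) * ‖lam + (n:ℂ) + 1‖ / 2 := by linarith
        have h8 : (0:ℝ) ≤ ‖ccoef lam μ n‖ * R ^ n := by positivity
        nlinarith [mul_le_mul_of_nonneg_right this h8]
    _ = ((n:ℝ)+1) * ‖lam + (n:ℂ) + 1‖ * (1/2 * (‖ccoef lam μ n‖ * R ^ n)) := by ring

lemma norm_term_le (D : ℕ → ℂ) (e : ℂ) {z : ℂ} (hz : z ≠ 0) (n : ℕ) :
    ‖D n * z ^ (e - 2 * (n:ℂ))‖
      ≤ ‖D n‖ * (‖z‖ ^ e.re * Real.exp (Real.pi * |e.im|)) * ((‖z‖⁻¹) ^ 2) ^ n := by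
  have hz0 : 0 < ‖z‖ := norm_pos_iff.mpr hz
  rw [norm_mul]
  have h1 : ‖z ^ (e - 2*(n:ℂ))‖
      = ‖z‖ ^ (e.re - 2*(n:ℝ)) / Real.exp (z.arg * e.im) := by
    rw [Complex.norm_cpow_of_ne_zero hz]
    norm_num [Complex.norm_def]
  have h2 : ‖z‖ ^ (e.re - 2*(n:ℝ)) = ‖z‖ ^ e.re * ((‖z‖⁻¹) ^ 2) ^ n := by
    rw [Real.rpow_sub hz0, show (2*(n:ℝ)) = ((2*n : ℕ) : ℝ) by push_cast; ring,
      Real.rpow_natCast, pow_mul, div_eq_mul_inv, ← inv_pow, ← inv_pow, ← pow_mul,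
      pow_mul]
  have h3 : Real.exp (z.arg * e.im) ≠ 0 := Real.exp_ne_zero _
  rw [h1, h2]
  have h4 : ‖z‖ ^ e.re * ((‖z‖⁻¹) ^ 2) ^ n / Real.exp (z.arg * e.im)
      = (‖z‖ ^ e.re * Real.exp (-(z.arg * e.im))) * ((‖z‖⁻¹) ^ 2) ^ n := by
    rw [Real.exp_neg]; ring
  rw [h4]
  have h5 : Real.exp (-(z.arg * e.im)) ≤ Real.exp (Real.pi * |e.im|) := by
    apply Real.exp_le_exp.mpr
    calc -(z.arg * e.im) ≤ |z.arg * e.im| := neg_le_abs _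
      _ = |z.arg| * |e.im| := abs_mul _ _
      _ ≤ Real.pi * |e.im| :=
        mul_le_mul_of_nonneg_right (Complex.abs_arg_le_pi z) (abs_nonneg _)
  have h6 : (0:ℝ) ≤ ‖z‖ ^ e.re := (Real.rpow_pos_of_pos hz0 _).le
  have h7 : (0:ℝ) ≤ ((‖z‖⁻¹) ^ 2) ^ n := by positivity
  have := mul_le_mul_of_nonneg_right
    (mul_le_mul_of_nonneg_left h5 h6) h7
  calc ‖D n‖ * (‖z‖ ^ e.re * Real.exp (-(z.arg * e.im)) * ((‖z‖⁻¹) ^ 2) ^ n)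
      ≤ ‖D n‖ * (‖z‖ ^ e.re * Real.exp (Real.pi * |e.im|) * ((‖z‖⁻¹) ^ 2) ^ n) :=
        mul_le_mul_of_nonneg_left this (norm_nonneg _)
    _ = ‖D n‖ * (‖z‖ ^ e.re * Real.exp (Real.pi * |e.im|)) * ((‖z‖⁻¹) ^ 2) ^ n := by ring

lemma summable_term {D : ℕ → ℂ} (hD : BDecay D) (e : ℂ) {z : ℂ} (hz : z ≠ 0) :
    Summable fun n => D n * z ^ (e - 2 * (n:ℂ)) := by
  have hz0 : 0 < ‖z‖ := norm_pos_iff.mpr hz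
  have hq : (0:ℝ) < (‖z‖⁻¹) ^ 2 := by positivity
  refine Summable.of_norm (Summable.of_nonneg_of_le (fun n => norm_nonneg _)
    (norm_term_le D e hz) ?_)
  exact ((hD _ hq).mul_left (‖z‖ ^ e.re * Real.exp (Real.pi * |e.im|))).congr
    fun n => by ring

lemma hasDerivAt_phi {D : ℕ → ℂ} (hD : BDecay D) (e : ℂ) {z₀ : ℂ} (hz : 0 < z₀.re) :
    HasDerivAt (fun z : ℂ => ∑' n, D n * z ^ (e - 2 * (n:ℂ)))
      (∑' (n : ℕ), (e - 2 * (n:ℂ)) * D n * z₀ ^ (e - 1 - 2 * (n:ℂ))) z₀ := by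
  set r : ℝ := z₀.re / 2 with hrdef
  set R : ℝ := ‖z₀‖ + 1 with hRdef
  have hr : 0 < r := half_pos hz
  have hreabs : z₀.re ≤ ‖z₀‖ := le_trans (le_abs_self _) (Complex.abs_re_le_norm z₀)
  set U : Set ℂ := {z | r < z.re ∧ ‖z‖ < R} with hUdef
  have hU : IsOpen U := by
    have : U = Complex.re ⁻¹' Set.Ioi r ∩ (fun z : ℂ => ‖z‖) ⁻¹' Set.Iio R := rfl
    rw [this]
    exact (isOpen_Ioi.preimage Complex.continuous_re).inter
      (isOpen_Iio.preimage continuous_norm)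
  have hz₀U : z₀ ∈ U := ⟨by simp only [hrdef]; linarith, by simp only [hRdef]; linarith⟩
  have hmem : ∀ z ∈ U, r < ‖z‖ ∧ z ≠ 0 ∧ 0 < z.re := by
    intro z hzU
    have h1 : r < z.re := hzU.1
    have h2 : z.re ≤ ‖z‖ := le_trans (le_abs_self _) (Complex.abs_re_le_norm z)
    refine ⟨lt_of_lt_of_le h1 h2, ?_, lt_trans hr h1⟩
    intro h; rw [h] at h1; simp at h1; linarith
  -- uniform bound
  set L : ℝ := max |Real.log r| |Real.log R| with hLdef
  set K : ℝ := Real.exp (L * |e.re|) * Real.exp (Real.pi * |e.im|) with hKdef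
  set u : ℕ → ℝ := fun n => ‖D n‖ * K * ((r⁻¹) ^ 2) ^ n with hudef
  have hu : Summable u :=
    ((hD ((r⁻¹)^2) (by positivity)).mul_left K).congr fun n => by simp [hudef]; ring
  have hF_le : ∀ (n : ℕ) (z : ℂ), z ∈ U → ‖D n * z ^ (e - 2*(n:ℂ))‖ ≤ u n := by
    intro n z hzU
    obtain ⟨hzr, hzne, hzre⟩ := hmem z hzU
    have hz0 : 0 < ‖z‖ := norm_pos_iff.mpr hzne
    refine (norm_term_le D e hzne n).trans ?_
    have hb1 : ‖z‖ ^ e.re ≤ Real.exp (L * |e.re|) := by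
      rw [Real.rpow_def_of_pos hz0]
      apply Real.exp_le_exp.mpr
      have hlogle : Real.log ‖z‖ ≤ Real.log R :=
        Real.log_le_log hz0 (le_of_lt hzU.2)
      have hlogge : Real.log r ≤ Real.log ‖z‖ := Real.log_le_log hr hzr.le
      have hlog : |Real.log ‖z‖| ≤ L := abs_le_max_abs_abs hlogge hlogle
      calc Real.log ‖z‖ * e.re ≤ |Real.log ‖z‖ * e.re| := le_abs_self _
        _ = |Real.log ‖z‖| * |e.re| := abs_mul _ _
        _ ≤ L * |e.re| := mul_le_mul_of_nonneg_right hlog (abs_nonneg _)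
    have hb2 : ((‖z‖⁻¹) ^ 2) ^ n ≤ ((r⁻¹) ^ 2) ^ n := by
      refine pow_le_pow_left₀ (by positivity) ?_ n
      exact pow_le_pow_left₀ (by positivity) (inv_anti₀ hr hzr.le) 2
    calc ‖D n‖ * (‖z‖ ^ e.re * Real.exp (Real.pi * |e.im|)) * ((‖z‖⁻¹) ^ 2) ^ n
        ≤ ‖D n‖ * (Real.exp (L * |e.re|) * Real.exp (Real.pi * |e.im|)) * ((r⁻¹) ^ 2) ^ n := by
          have hexp : (0:ℝ) ≤ Real.exp (Real.pi * |e.im|) := (Real.exp_pos _).le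
          have hmul1 : ‖z‖ ^ e.re * Real.exp (Real.pi * |e.im|)
              ≤ Real.exp (L * |e.re|) * Real.exp (Real.pi * |e.im|) :=
            mul_le_mul_of_nonneg_right hb1 hexp
          have h1 := mul_le_mul_of_nonneg_left hmul1 (norm_nonneg (D n))
          have h2 : (0:ℝ) ≤ ‖D n‖ * (Real.exp (L * |e.re|) * Real.exp (Real.pi * |e.im|)) := by
            positivity
          calc ‖D n‖ * (‖z‖ ^ e.re * Real.exp (Real.pi * |e.im|)) * ((‖z‖⁻¹) ^ 2) ^ n
              ≤ ‖D n‖ * (Real.exp (L * |e.re|) * Real.exp (Real.pi * |e.im|))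
                  * ((‖z‖⁻¹) ^ 2) ^ n :=
                mul_le_mul_of_nonneg_right h1 (by positivity)
            _ ≤ ‖D n‖ * (Real.exp (L * |e.re|) * Real.exp (Real.pi * |e.im|))
                  * ((r⁻¹) ^ 2) ^ n :=
                mul_le_mul_of_nonneg_left hb2 h2
      _ = u n := rfl
  -- differentiability of each term
  have hf : ∀ n : ℕ, DifferentiableOn ℂ (fun z : ℂ => D n * z ^ (e - 2*(n:ℂ))) U := by
    intro n z hzU
    obtain ⟨_, _, hzre⟩ := hmem z hzU
    have h := ((hasDerivAt_id z).cpow_const (c := e - 2*(n:ℂ)) (Or.inl hzre)).const_mul (D n)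
    exact h.differentiableAt.differentiableWithinAt
  have hdiff := (Complex.differentiableOn_tsum_of_summable_norm hu hf hU hF_le).differentiableAt
    (hU.mem_nhds hz₀U)
  have hderiv := Complex.hasSum_deriv_of_summable_norm hu hf hU hF_le hz₀U
  have hterm : (fun n => deriv (fun z : ℂ => D n * z ^ (e - 2*(n:ℂ))) z₀)
      = fun (n : ℕ) => (e - 2*(n:ℂ)) * D n * z₀ ^ (e - 1 - 2*(n:ℂ)) := by
    funext n
    have h := ((hasDerivAt_id z₀).cpow_const (c := e - 2*(n:ℂ)) (Or.inl hz)).const_mul (D n)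
    have h' : HasDerivAt (fun z : ℂ => D n * z ^ (e - 2*(n:ℂ)))
        (D n * ((e - 2*(n:ℂ)) * z₀ ^ (e - 2*(n:ℂ) - 1) * 1)) z₀ := h
    rw [h'.deriv, show e - 2*(n:ℂ) - 1 = e - 1 - 2*(n:ℂ) by ring]
    ring
  rw [hterm] at hderiv
  have hfin := hdiff.hasDerivAt
  rwa [← hderiv.tsum_eq] at hfin



lemma mul_ofReal_cpow {x : ℂ} (hx : x ≠ 0) {r : ℝ} (hr : 0 < r) (c : ℂ) :
    (x * (r:ℂ)) ^ c = x ^ c * (r:ℂ) ^ c := by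
  have hr' : (r:ℂ) ≠ 0 := Complex.ofReal_ne_zero.mpr hr.ne'
  rw [Complex.cpow_def_of_ne_zero (mul_ne_zero hx hr'), Complex.log_mul_ofReal r hr x hx,
    add_mul, Complex.exp_add, ← Complex.cpow_def_of_ne_zero hx, Complex.ofReal_log hr.le,
    ← Complex.cpow_def_of_ne_zero hr', mul_comm]

lemma besselF_eq (lam μ : ℂ) (hμ : μ ≠ 0) {H : ℝ} (hH : 0 < H) :
    besselF lam μ H = ∑' (n : ℕ), ccoef lam μ n * (H:ℂ) ^ (-(lam+1) - 2*(n:ℂ)) := by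
  have hHC : (H:ℂ) ≠ 0 := Complex.ofReal_ne_zero.mpr hH.ne'
  unfold besselF besselI
  rw [← tsum_mul_left]
  refine tsum_congr fun n => ?_
  have h2 : 2 * μ / (H:ℂ) / 2 = μ * (((H⁻¹ : ℝ)) : ℂ) := by
    push_cast
    field_simp
  rw [h2, mul_ofReal_cpow hμ (inv_pos.mpr hH)]
  have h3 : ((((H⁻¹:ℝ)) : ℂ)) ^ (lam + 2*(n:ℂ)) = (H:ℂ) ^ (-(lam + 2*(n:ℂ))) := by
    push_cast
    rw [Complex.inv_cpow _ _ (by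
      rw [Complex.arg_ofReal_of_nonneg hH.le]; exact Ne.symm Real.pi_ne_zero),
      ← Complex.cpow_neg]
  rw [h3]
  unfold ccoef bcoef
  rw [div_eq_mul_inv]
  have h4 : (H:ℂ)⁻¹ = (H:ℂ) ^ (-1 : ℂ) := (Complex.cpow_neg_one _).symm
  have h5 : (H:ℂ) ^ (-(lam + 2*(n:ℂ))) * (H:ℂ) ^ (-1:ℂ) = (H:ℂ) ^ (-(lam+1) - 2*(n:ℂ)) := by
    rw [← Complex.cpow_add _ _ hHC]
    congr 1
    ring
  calc (H:ℂ)⁻¹ * (μ ^ (lam + 2*(n:ℂ)) * (H:ℂ) ^ (-(lam + 2*(n:ℂ)))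
        * ((n.factorial : ℂ) * Complex.Gamma (lam + n + 1))⁻¹)
      = μ ^ (lam + 2*(n:ℂ)) * ((n.factorial : ℂ) * Complex.Gamma (lam + n + 1))⁻¹
        * ((H:ℂ) ^ (-(lam + 2*(n:ℂ))) * (H:ℂ) ^ (-1:ℂ)) := by rw [← h4]; ring
    _ = μ ^ (lam + 2*(n:ℂ)) * ((n.factorial : ℂ) * Complex.Gamma (lam + n + 1))⁻¹
        * (H:ℂ) ^ (-(lam+1) - 2*(n:ℂ)) := by rw [h5]
    _ = μ ^ (lam + 2*(n:ℂ)) * ((n.factorial : ℂ) * Complex.Gamma (lam + n + 1))⁻¹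
        * (H:ℂ) ^ (-(lam+1) - 2*(n:ℂ)) := rfl

lemma main_ode (lam μ : ℂ) (hμ : μ ≠ 0) {H : ℝ} (hH : 0 < H) :
    (1 / 4) * (H : ℂ) ^ 2 * deriv (deriv (besselF lam μ)) H
      + (3 / 4) * (H : ℂ) * deriv (besselF lam μ) H
      - μ ^ 2 / (H : ℂ) ^ 2 * besselF lam μ H
    = (1 / 4) * (lam ^ 2 - 1) * besselF lam μ H := by
  have hC : BDecay (ccoef lam μ) := decay_ccoef lam μ hμ
  have hC₁ : BDecay (fun n : ℕ => (-(lam+1) - 2*(n:ℂ)) * ccoef lam μ n) :=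
    hC.mul_linear (-(lam+1)) 2
  have hC₂ : BDecay (fun n : ℕ =>
      (-(lam+1) - 1 - 2*(n:ℂ)) * ((-(lam+1) - 2*(n:ℂ)) * ccoef lam μ n)) :=
    hC₁.mul_linear (-(lam+1) - 1) 2
  have hA : ∀ x : ℝ, 0 < x →
      HasDerivAt (fun y : ℝ => ∑' (n : ℕ), ccoef lam μ n * ((y:ℂ)) ^ (-(lam+1) - 2*(n:ℂ)))
        (∑' (n : ℕ), (-(lam+1) - 2*(n:ℂ)) * ccoef lam μ n
          * ((x:ℂ)) ^ (-(lam+1) - 1 - 2*(n:ℂ))) x := by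
    intro x hx
    exact (hasDerivAt_phi hC (-(lam+1)) (z₀ := (x:ℂ)) (by simpa using hx)).comp_ofReal
  have hA₁ : ∀ x : ℝ, 0 < x →
      HasDerivAt (fun y : ℝ => ∑' (n : ℕ), (-(lam+1) - 2*(n:ℂ)) * ccoef lam μ n
          * ((y:ℂ)) ^ (-(lam+1) - 1 - 2*(n:ℂ)))
        (∑' (n : ℕ), (-(lam+1) - 1 - 2*(n:ℂ)) * ((-(lam+1) - 2*(n:ℂ)) * ccoef lam μ n)
          * ((x:ℂ)) ^ (-(lam+1) - 1 - 1 - 2*(n:ℂ))) x := by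
    intro x hx
    exact (hasDerivAt_phi hC₁ (-(lam+1) - 1) (z₀ := (x:ℂ)) (by simpa using hx)).comp_ofReal
  have hd1 : ∀ x : ℝ, 0 < x → deriv (besselF lam μ) x
      = ∑' (n : ℕ), (-(lam+1) - 2*(n:ℂ)) * ccoef lam μ n
          * ((x:ℂ)) ^ (-(lam+1) - 1 - 2*(n:ℂ)) := by
    intro x hx
    have hev : besselF lam μ =ᶠ[nhds x]
        (fun y : ℝ => ∑' (n : ℕ), ccoef lam μ n * ((y:ℂ)) ^ (-(lam+1) - 2*(n:ℂ))) :=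
      eventually_of_mem (Ioi_mem_nhds hx) (fun y hy => besselF_eq lam μ hμ hy)
    rw [hev.deriv_eq]
    exact (hA x hx).deriv
  have hd2 : deriv (deriv (besselF lam μ)) H
      = ∑' (n : ℕ), (-(lam+1) - 1 - 2*(n:ℂ)) * ((-(lam+1) - 2*(n:ℂ)) * ccoef lam μ n)
          * ((H:ℂ)) ^ (-(lam+1) - 1 - 1 - 2*(n:ℂ)) := by
    have hev : deriv (besselF lam μ) =ᶠ[nhds H]
        (fun y : ℝ => ∑' (n : ℕ), (-(lam+1) - 2*(n:ℂ)) * ccoef lam μ n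
          * ((y:ℂ)) ^ (-(lam+1) - 1 - 2*(n:ℂ))) :=
      eventually_of_mem (Ioi_mem_nhds hH) (fun y hy => hd1 y hy)
    rw [hev.deriv_eq]
    exact (hA₁ H hH).deriv
  have hzC : (H:ℂ) ≠ 0 := Complex.ofReal_ne_zero.mpr hH.ne'
  have hs0 : Summable (fun n : ℕ => ccoef lam μ n * (H:ℂ) ^ (-(lam+1) - 2*(n:ℂ))) :=
    summable_term hC _ hzC
  have hs1 : Summable (fun n : ℕ => (-(lam+1) - 2*(n:ℂ)) * ccoef lam μ n
      * (H:ℂ) ^ (-(lam+1) - 1 - 2*(n:ℂ))) := summable_term hC₁ _ hzC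
  have hs2 : Summable (fun n : ℕ => (-(lam+1) - 1 - 2*(n:ℂ))
      * ((-(lam+1) - 2*(n:ℂ)) * ccoef lam μ n)
      * (H:ℂ) ^ (-(lam+1) - 1 - 1 - 2*(n:ℂ))) := summable_term hC₂ _ hzC
  have hsf : Summable (fun n : ℕ => (n:ℂ) * (lam + (n:ℂ)) * ccoef lam μ n
      * (H:ℂ) ^ (-(lam+1) - 2*(n:ℂ))) := by
    have hCa : BDecay (fun n : ℕ => (lam + (n:ℂ)) * ccoef lam μ n) :=
      (hC.mul_linear lam (-1)).congr (fun n => by ring)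
    have hCb : BDecay (fun n : ℕ => (n:ℂ) * ((lam + (n:ℂ)) * ccoef lam μ n)) :=
      (hCa.mul_linear 0 (-1)).congr (fun n => by ring)
    exact (summable_term hCb (-(lam+1)) hzC).congr (fun n => by ring)
  have hsg : Summable (fun n : ℕ => μ^2 * ccoef lam μ n
      * (H:ℂ) ^ (-(lam+1) - 2*(n:ℂ) - 2)) := by
    have h := (summable_term hC (-(lam+1) - 2) hzC).mul_left (μ^2)
    exact h.congr (fun n => by
      rw [show -(lam+1) - 2 - 2*(n:ℂ) = -(lam+1) - 2*(n:ℂ) - 2 by ring]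
      ring)
  have hshift : ∑' (n:ℕ), (n:ℂ) * (lam + (n:ℂ)) * ccoef lam μ n
        * (H:ℂ) ^ (-(lam+1) - 2*(n:ℂ))
      = ∑' (n:ℕ), μ^2 * ccoef lam μ n * (H:ℂ) ^ (-(lam+1) - 2*(n:ℂ) - 2) := by
    rw [Summable.tsum_eq_zero_add hsf]
    have h0 : (((0:ℕ)):ℂ) * (lam + ((0:ℕ):ℂ)) * ccoef lam μ 0
        * (H:ℂ) ^ (-(lam+1) - 2*(((0:ℕ)):ℂ)) = 0 := by
      norm_num
    rw [h0, zero_add]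
    refine tsum_congr fun n => ?_
    have hcast : (((n+1:ℕ)):ℂ) = (n:ℂ) + 1 := by push_cast; ring
    rw [hcast, show -(lam+1) - 2*((n:ℂ)+1) = -(lam+1) - 2*(n:ℂ) - 2 by ring]
    linear_combination (-((H:ℂ) ^ (-(lam+1) - 2*(n:ℂ) - 2))) * (ccoef_rec lam μ hμ n)
  have hz2 : (H:ℂ) ^ (2:ℂ) = (H:ℂ)^2 := cpow_two' _
  have key2 : ∀ a : ℂ, (H:ℂ)^2 * (H:ℂ) ^ (a - 2) = (H:ℂ) ^ a := fun a => by
    rw [← hz2, ← Complex.cpow_add _ _ hzC]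
    congr 1
    ring
  have key1 : ∀ a : ℂ, (H:ℂ) * (H:ℂ) ^ (a - 1) = (H:ℂ) ^ a := fun a => by
    calc (H:ℂ) * (H:ℂ) ^ (a-1) = (H:ℂ)^(1:ℂ) * (H:ℂ)^(a-1) := by rw [Complex.cpow_one]
      _ = (H:ℂ)^(1 + (a-1)) := (Complex.cpow_add _ _ hzC).symm
      _ = (H:ℂ)^a := by congr 1; ring
  have keyd : ∀ a : ℂ, (H:ℂ) ^ a / (H:ℂ)^2 = (H:ℂ) ^ (a - 2) := fun a => by
    rw [← hz2, ← Complex.cpow_sub _ _ hzC]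
  have hsplit : ∀ n : ℕ,
      (1/4) * (H:ℂ)^2 * ((-(lam+1) - 1 - 2*(n:ℂ)) * ((-(lam+1) - 2*(n:ℂ)) * ccoef lam μ n)
          * (H:ℂ) ^ (-(lam+1) - 1 - 1 - 2*(n:ℂ)))
        + (3/4) * (H:ℂ) * ((-(lam+1) - 2*(n:ℂ)) * ccoef lam μ n
          * (H:ℂ) ^ (-(lam+1) - 1 - 2*(n:ℂ)))
        - μ^2 / (H:ℂ)^2 * (ccoef lam μ n * (H:ℂ) ^ (-(lam+1) - 2*(n:ℂ)))
      = (1/4) * (lam^2 - 1) * (ccoef lam μ n * (H:ℂ) ^ (-(lam+1) - 2*(n:ℂ)))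
        + ((n:ℂ) * (lam + (n:ℂ)) * ccoef lam μ n * (H:ℂ) ^ (-(lam+1) - 2*(n:ℂ))
           - μ^2 * ccoef lam μ n * (H:ℂ) ^ (-(lam+1) - 2*(n:ℂ) - 2)) := by
    intro n
    have e2 : (H:ℂ) ^ (-(lam+1) - 1 - 1 - 2*(n:ℂ)) = (H:ℂ) ^ (-(lam+1) - 2*(n:ℂ) - 2) := by
      congr 1
      ring
    have e1 : (H:ℂ) ^ (-(lam+1) - 1 - 2*(n:ℂ)) = (H:ℂ) ^ (-(lam+1) - 2*(n:ℂ) - 1) := by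
      congr 1
      ring
    have ed : μ^2 / (H:ℂ)^2 * (ccoef lam μ n * (H:ℂ) ^ (-(lam+1) - 2*(n:ℂ)))
        = μ^2 * ccoef lam μ n * (H:ℂ) ^ (-(lam+1) - 2*(n:ℂ) - 2) := by
      calc μ^2 / (H:ℂ)^2 * (ccoef lam μ n * (H:ℂ) ^ (-(lam+1) - 2*(n:ℂ)))
          = μ^2 * ccoef lam μ n * ((H:ℂ) ^ (-(lam+1) - 2*(n:ℂ)) / (H:ℂ)^2) := by ring
        _ = μ^2 * ccoef lam μ n * (H:ℂ) ^ (-(lam+1) - 2*(n:ℂ) - 2) := by rw [keyd]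
    rw [e2, e1, ed]
    linear_combination
      ((1/4) * ((-(lam+1) - 1 - 2*(n:ℂ)) * ((-(lam+1) - 2*(n:ℂ)) * ccoef lam μ n)))
          * key2 (-(lam+1) - 2*(n:ℂ))
        + ((3/4) * ((-(lam+1) - 2*(n:ℂ)) * ccoef lam μ n)) * key1 (-(lam+1) - 2*(n:ℂ))
  rw [hd2, hd1 H hH, besselF_eq lam μ hμ hH]
  rw [← tsum_mul_left, ← tsum_mul_left, ← tsum_mul_left, ← tsum_mul_left]
  rw [← Summable.tsum_add (hs2.mul_left ((1/4) * (H:ℂ)^2)) (hs1.mul_left ((3/4) * (H:ℂ))),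
    ← Summable.tsum_sub ((hs2.mul_left ((1/4) * (H:ℂ)^2)).add (hs1.mul_left ((3/4) * (H:ℂ))))
      (hs0.mul_left (μ^2 / (H:ℂ)^2))]
  rw [tsum_congr hsplit]
  rw [Summable.tsum_add (hs0.mul_left ((1/4) * (lam^2-1))) (hsf.sub hsg), Summable.tsum_sub hsf hsg, hshift]
  ring

/-- For `μ ≠ 0` the function `F(H) = H⁻¹ I_λ(2μH⁻¹)` satisfies
`¼H²F'' + ¾HF' − μ²H⁻²F = ¼(λ²−1)F` on `H > 0`; in particular for `λ = ±iν`
it is an eigenfunction with eigenvalue `−¼(ν²+1)` (the Laplace–Beltrami operator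
on the Lobachevsky space in horospheric coordinates after Fourier transform
along the horosphere). -/
theorem besselF_eigen (lam μ : ℂ) (hμ : μ ≠ 0) :
    (∀ H : ℝ, 0 < H →
      (1 / 4) * (H : ℂ) ^ 2 * deriv (deriv (besselF lam μ)) H
        + (3 / 4) * (H : ℂ) * deriv (besselF lam μ) H
        - μ ^ 2 / (H : ℂ) ^ 2 * besselF lam μ H
      = (1 / 4) * (lam ^ 2 - 1) * besselF lam μ H) ∧
    (∀ ν : ℝ, lam = Complex.I * ν ∨ lam = -(Complex.I * ν) →
      ∀ H : ℝ, 0 < H →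
        (1 / 4) * (H : ℂ) ^ 2 * deriv (deriv (besselF lam μ)) H
          + (3 / 4) * (H : ℂ) * deriv (besselF lam μ) H
          - μ ^ 2 / (H : ℂ) ^ 2 * besselF lam μ H
        = -(1 / 4) * ((ν : ℂ) ^ 2 + 1) * besselF lam μ H) := by
  constructor
  · exact fun H hH => main_ode lam μ hμ hH
  · intro ν hν H hH
    have hlam : lam ^ 2 = -(ν:ℂ)^2 := by
      rcases hν with h | h <;> rw [h] <;>
        linear_combination ((ν:ℂ)^2) * Complex.I_sq
    rw [main_ode lam μ hμ hH, hlam]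
    ring
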